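/- Let O be the d²×d² real matrix relating two normalized SIC POVMs {E_k} and {Ẽ_k} in dimension d via Ẽ_i = ∑_j O_{ij}E_j (which exists since {E_j} spans the space of Hermitian operators). Then O is an orthogonal matrix. -/

import Mathlib

open Matrix BigOperators
open scoped Kronecker

/-- Trace norm (sum of singular values) of a real matrix. -/
noncomputable def traceNorm {m n : Type*} [Fintype m] [Fintype n] [DecidableEq m]
    (M : Matrix m n ℝ) : ℝ :=
  ((Matrix.posSemidef_self_mul_conjTranspose M).isHermitian.eigenvectorUnitary.1 *
      diagonal ((RCLike.ofReal : ℝ → ℝ) ∘ (√·) ∘ (Matrix.posSemidef_self_mul_conjTranspose M).isHermitian.eigenvalues) *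
      (star (Matrix.posSemidef_self_mul_conjTranspose M).isHermitian.eigenvectorUnitary :
        Matrix m m ℝ)).trace

/-- The SIC overlap condition for a family of `d²` vectors in `ℂ^d`. -/
def IsSIC (d : ℕ) (ψ : Fin (d ^ 2) → Fin d → ℂ) : Prop :=
  ∀ i j, ‖dotProduct (star (ψ i)) (ψ j)‖ ^ 2 =
    ((if i = j then (d : ℝ) else 0) + 1) / ((d : ℝ) + 1)

/-- The SIC POVM element `Π_k = |ψ_k⟩⟨ψ_k| / d`. -/
noncomputable def sicProj (d : ℕ) (ψ : Fin (d ^ 2) → Fin d → ℂ) (k : Fin (d ^ 2)) :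
    Matrix (Fin d) (Fin d) ℂ :=
  (d : ℂ)⁻¹ • vecMulVec (ψ k) (star (ψ k))
lemma trace_vvmul {d : ℕ} (a b : Fin d → ℂ) :
    (vecMulVec a (star a) * vecMulVec b (star b)).trace
      = ((‖dotProduct (star a) b‖ ^ 2 : ℝ) : ℂ) := by
  have : (vecMulVec a (star a) * vecMulVec b (star b)).trace
      = dotProduct (star a) b * dotProduct (star b) a := by
    simp only [Matrix.trace, Matrix.diag, Matrix.mul_apply, vecMulVec_apply,
      dotProduct, Pi.star_apply, Finset.sum_mul, Finset.mul_sum]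
    congr 1; ext i; congr 1; ext k; ring
  rw [this]
  have h2 : dotProduct (star b) a = star (dotProduct (star a) b) := by
    simp [dotProduct, star_sum, mul_comm]
  rw [h2, Complex.star_def, Complex.mul_conj, ← Complex.sq_norm]

lemma sic_norm {d : ℕ} {ψ : Fin (d ^ 2) → Fin d → ℂ} (hsic : IsSIC d ψ)
    (k : Fin (d ^ 2)) : dotProduct (star (ψ k)) (ψ k) = 1 := by
  have h := hsic k k
  have hd1 : (d : ℝ) + 1 ≠ 0 := by positivity
  rw [if_pos rfl, div_self hd1] at h
  have hz : dotProduct (star (ψ k)) (ψ k)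
      = ((∑ i, Complex.normSq (ψ k i) : ℝ) : ℂ) := by
    simp [dotProduct, Complex.star_def, Complex.normSq_eq_conj_mul_self]
  have hnn : (0:ℝ) ≤ ∑ i, Complex.normSq (ψ k i) :=
    Finset.sum_nonneg fun i _ => Complex.normSq_nonneg _
  rw [hz] at h ⊢
  rw [Complex.norm_real, Real.norm_eq_abs, abs_of_nonneg hnn] at h
  have : ∑ i, Complex.normSq (ψ k i) = 1 := by nlinarith
  rw [this]; norm_num


theorem sic_transition_orthogonal (d : ℕ) (hd : 0 < d)
    (ψ : Fin (d ^ 2) → Fin d → ℂ) (hsic : IsSIC d ψ)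
    (φ : Fin (d ^ 2) → Fin d → ℂ) (hsic' : IsSIC d φ)
    (E : Fin (d ^ 2) → Matrix (Fin d) (Fin d) ℂ)
    (hE : ∀ k, E k = (Real.sqrt ((d : ℝ) * ((d : ℝ) + 1) / 2) : ℂ) • sicProj d ψ k)
    (E' : Fin (d ^ 2) → Matrix (Fin d) (Fin d) ℂ)
    (hE' : ∀ k, E' k = (Real.sqrt ((d : ℝ) * ((d : ℝ) + 1) / 2) : ℂ) • sicProj d φ k)
    (O : Matrix (Fin (d ^ 2)) (Fin (d ^ 2)) ℝ)
    (hO : ∀ i, E' i = ∑ j, (O i j : ℂ) • E j) :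
    Oᵀ * O = 1 ∧ O * Oᵀ = 1 := by
  have hdR : (0:ℝ) < d := by exact_mod_cast hd
  set s : ℝ := Real.sqrt ((d : ℝ) * ((d : ℝ) + 1) / 2) with hs
  have hspos : 0 < s := Real.sqrt_pos.mpr (by positivity)
  have hs2 : s ^ 2 = (d:ℝ) * ((d:ℝ) + 1) / 2 := Real.sq_sqrt (by positivity)
  have hss : s * s = (d:ℝ) * ((d:ℝ) + 1) / 2 := by nlinarith
  have hdC : (d : ℂ) ≠ 0 := Nat.cast_ne_zero.mpr hd.ne'
  have hd1C : ((d:ℂ) + 1) ≠ 0 := by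
    have : ((d:ℝ) + 1) ≠ 0 := by positivity
    exact_mod_cast Complex.ofReal_ne_zero.mpr this
  -- traces
  have htr : ∀ (χ : Fin (d^2) → Fin d → ℂ), IsSIC d χ →
      ∀ k, ((s : ℂ) • sicProj d χ k).trace = ((s / d : ℝ) : ℂ) := by
    intro χ hχ k
    have h1 : (vecMulVec (χ k) (star (χ k))).trace = dotProduct (star (χ k)) (χ k) := by
      simp [Matrix.trace, Matrix.diag, vecMulVec_apply, dotProduct, mul_comm]
    rw [sicProj, Matrix.trace_smul, Matrix.trace_smul, h1, sic_norm hχ]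
    simp only [smul_eq_mul]
    push_cast
    field_simp
  -- gram
  have hgram : ∀ (χ : Fin (d^2) → Fin d → ℂ), IsSIC d χ → ∀ i j,
      (((s : ℂ) • sicProj d χ i) * ((s : ℂ) • sicProj d χ j)).trace
        = ((((if i = j then (d:ℝ) else 0) + 1) / (2 * d) : ℝ) : ℂ) := by
    intro χ hχ i j
    have heq : (((s : ℂ) • sicProj d χ i) * ((s : ℂ) • sicProj d χ j))
        = ((s * s : ℝ) : ℂ) • ((d:ℂ)⁻¹ * (d:ℂ)⁻¹) •
            (vecMulVec (χ i) (star (χ i)) * vecMulVec (χ j) (star (χ j))) := by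
      simp only [sicProj, smul_mul_assoc, mul_smul_comm]
      push_cast
      rw [smul_smul, smul_smul, smul_smul, smul_smul]
      ring_nf
    rw [heq, Matrix.trace_smul, Matrix.trace_smul, trace_vvmul, hχ i j, hss,
      smul_eq_mul, smul_eq_mul]
    push_cast
    field_simp
  -- row sums = 1
  have hrow : ∀ i, ∑ j, O i j = 1 := by
    intro i
    have h1 : (E' i).trace = ∑ j, (O i j : ℂ) * (E j).trace := by
      rw [hO i, Matrix.trace_sum]
      simp [Matrix.trace_smul]
    rw [hE' i, htr φ hsic' i] at h1
    have h2 : ∀ j, (E j).trace = ((s / d : ℝ) : ℂ) := fun j => by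
      rw [hE j]; exact htr ψ hsic j
    simp only [h2, ← Finset.sum_mul] at h1
    have hne : ((s / d : ℝ) : ℂ) ≠ 0 := by
      simp only [ne_eq, Complex.ofReal_eq_zero]
      positivity
    have h3 : (∑ j, (O i j : ℂ)) * ((s / d : ℝ) : ℂ) = 1 * ((s / d : ℝ) : ℂ) := by
      rw [one_mul]; exact h1.symm
    have h4 := mul_right_cancel₀ hne h3
    have h5 : ((∑ j, O i j : ℝ) : ℂ) = 1 := by push_cast; exact h4
    exact_mod_cast h5
  -- main identity
  have hmain : O * Oᵀ = 1 := by
    ext i j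
    have h1 : (E' i * E' j).trace = ((((if i = j then (d:ℝ) else 0) + 1) / (2 * d) : ℝ) : ℂ) := by
      rw [hE' i, hE' j]; exact hgram φ hsic' i j
    have h2 : (E' i * E' j).trace
        = ∑ k, ∑ l, (O i k : ℂ) * (O j l : ℂ) *
            ((((if k = l then (d:ℝ) else 0) + 1) / (2 * d) : ℝ) : ℂ) := by
      rw [hO i, hO j, Finset.sum_mul_sum]
      rw [Matrix.trace_sum]
      congr 1; ext k
      rw [Matrix.trace_sum]
      congr 1; ext l
      rw [smul_mul_smul_comm, Matrix.trace_smul, smul_eq_mul]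
      rw [show (E k * E l) = ((s:ℂ) • sicProj d ψ k) * ((s:ℂ) • sicProj d ψ l) by
        rw [hE k, hE l]]
      rw [hgram ψ hsic k l]
    rw [h2] at h1
    have h1R : ∑ k, ∑ l, O i k * O j l * (((if k = l then (d:ℝ) else 0) + 1) / (2 * d))
        = ((if i = j then (d:ℝ) else 0) + 1) / (2 * d) := by
      push_cast at h1
      exact_mod_cast h1
    have inner : ∀ k, ∑ l, O i k * O j l * (((if k = l then (d:ℝ) else 0) + 1) / (2 * d))
        = O i k * O j k * ((d:ℝ) / (2 * d)) + O i k * (1 / (2 * d)) := by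
      intro k
      have hterm : ∀ l, O i k * O j l * (((if k = l then (d:ℝ) else 0) + 1) / (2 * d))
          = (if l = k then O i k * O j k * ((d:ℝ) / (2 * d)) else 0)
            + O i k * O j l * (1 / (2 * d)) := by
        intro l
        by_cases h : k = l
        · subst h; rw [if_pos rfl, if_pos rfl]; ring
        · rw [if_neg h, if_neg (Ne.symm h)]; ring
      rw [Finset.sum_congr rfl (fun l _ => hterm l), Finset.sum_add_distrib,
        Finset.sum_ite_eq' Finset.univ k _]
      simp only [Finset.mem_univ, if_true]
      congr 1
      calc ∑ l, O i k * O j l * (1 / (2 * ↑d))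
          = (∑ l, O j l) * (O i k * (1 / (2 * ↑d))) := by
            rw [Finset.sum_mul]; congr 1; ext l; ring
        _ = O i k * (1 / (2 * ↑d)) := by rw [hrow j, one_mul]
    rw [Finset.sum_congr rfl (fun k _ => inner k), Finset.sum_add_distrib,
      ← Finset.sum_mul, ← Finset.sum_mul, hrow i, one_mul] at h1R
    have key : ∑ k, O i k * O j k = if i = j then 1 else 0 := by
      have h2d : (2 * (d:ℝ)) ≠ 0 := by positivity
      by_cases hij : i = j
      · rw [if_pos hij] at h1R ⊢
        field_simp at h1R
        nlinarith [h1R]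
      · rw [if_neg hij] at h1R ⊢
        field_simp at h1R
        nlinarith [h1R]
    simp only [Matrix.mul_apply, Matrix.transpose_apply, Matrix.one_apply]
    exact key
  exact ⟨mul_eq_one_comm.mp hmain, hmain⟩
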